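/- Let (X,d) be a metric space containing points s, m₁, m₂, t with d(s,m₁) = d(s,m₂) = d(m₁,t) = d(m₂,t) = (1/2)(1+ε^q)^{1/q} d(s,t) and d(m₁,m₂) = ε·d(s,t), where ε > 0 satisfies (1+ε^q)^{1/q} ≤ 2 and d(s,t) > 0. Let (Y, d_Y) be a metric space such that for all y₁, y₂ ∈ Y, any two points in the approximate midpoint set Mid(y₁, y₂, η_Y(t)) are at distance less than t·d_Y(y₁,y₂), where η_Y is the rounded ball modulus. If f : X → Y satisfies (1/A)d(x,y) ≤ d_Y(f(x), f(y)) ≤ B·d(x,y) on {s, m₁, m₂, t}, then d_Y(f(s), f(t)) ≤ B·d(s,t)·(1+ε^q)^{1/q}·(1 − (1/2)η_Y(ε/(2AB))). -/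

import Mathlib

/-- the contraction lemma for rounded ball target spaces
(Lemma `contraction_rb`). Here `η` is the rounded ball modulus of `Y`: for every
`τ > 0` and distinct `y₁ y₂`, any two points of the approximate midpoint set
`Mid(y₁, y₂, η τ)` lie at distance less than `τ · d_Y(y₁, y₂)` (so `η τ ∈ [0,1]`). -/
theorem contraction_rounded_ball {X Y : Type*} [MetricSpace X] [MetricSpace Y]
    (q ε A B : ℝ) (hq : 1 ≤ q) (hε : 0 < ε)
    (hε2 : (1 + ε ^ q) ^ (1/q) ≤ 2)
    (hA : 0 < A) (hB : 0 < B) (hAB : 1 ≤ A * B)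
    (s m₁ m₂ t : X) (hst : 0 < dist s t)
    (h1 : dist s m₁ = (1/2) * (1 + ε ^ q) ^ (1/q) * dist s t)
    (h2 : dist s m₂ = (1/2) * (1 + ε ^ q) ^ (1/q) * dist s t)
    (h3 : dist m₁ t = (1/2) * (1 + ε ^ q) ^ (1/q) * dist s t)
    (h4 : dist m₂ t = (1/2) * (1 + ε ^ q) ^ (1/q) * dist s t)
    (h5 : dist m₁ m₂ = ε * dist s t)
    (η : ℝ → ℝ) (hη01 : ∀ τ, 0 ≤ η τ ∧ η τ ≤ 1)
    (hη : ∀ τ : ℝ, 0 < τ → ∀ y₁ y₂ w z : Y, y₁ ≠ y₂ →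
      max (dist y₁ w) (dist y₂ w) ≤ (1 + η τ) / 2 * dist y₁ y₂ →
      max (dist y₁ z) (dist y₂ z) ≤ (1 + η τ) / 2 * dist y₁ y₂ →
      dist w z < τ * dist y₁ y₂)
    (f : X → Y)
    (hf : ∀ x ∈ ({s, m₁, m₂, t} : Set X), ∀ x' ∈ ({s, m₁, m₂, t} : Set X),
      (1/A) * dist x x' ≤ dist (f x) (f x') ∧ dist (f x) (f x') ≤ B * dist x x') :
    dist (f s) (f t) ≤ B * dist s t * (1 + ε ^ q) ^ (1/q) *
      (1 - (1/2) * η (ε / (2 * A * B))) := by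
  by_contra hcon
  push_neg at hcon
  set L := (1 + ε ^ q) ^ (1/q) with hLdef
  have hεq : (0:ℝ) < ε ^ q := Real.rpow_pos_of_pos hε q
  have hLpos : (0:ℝ) < L := Real.rpow_pos_of_pos (by linarith) _
  set d := dist s t with hd
  set τ := ε / (2 * A * B) with hτdef
  have hτpos : 0 < τ := by positivity
  obtain ⟨hη0, hη1⟩ := hη01 τ
  have hsmem : s ∈ ({s, m₁, m₂, t} : Set X) := by simp
  have hm1mem : m₁ ∈ ({s, m₁, m₂, t} : Set X) := by simp
  have hm2mem : m₂ ∈ ({s, m₁, m₂, t} : Set X) := by simp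
  have htmem : t ∈ ({s, m₁, m₂, t} : Set X) := by simp
  obtain ⟨hstl, hstu⟩ := hf s hsmem t htmem
  obtain ⟨hsm1l, hsm1u⟩ := hf s hsmem m₁ hm1mem
  obtain ⟨hsm2l, hsm2u⟩ := hf s hsmem m₂ hm2mem
  obtain ⟨hm1tl, hm1tu⟩ := hf m₁ hm1mem t htmem
  obtain ⟨hm2tl, hm2tu⟩ := hf m₂ hm2mem t htmem
  obtain ⟨hmml, hmmu⟩ := hf m₁ hm1mem m₂ hm2mem
  set D := dist (f s) (f t) with hD
  have hDpos : 0 < D := by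
    have : 0 < (1/A) * d := by positivity
    linarith
  have hne : f s ≠ f t := by
    intro h
    rw [hD, h, dist_self] at hDpos
    exact lt_irrefl _ hDpos
  -- key inequality: B * L * d / 2 ≤ (1 + η τ) / 2 * D
  have hkey : B * (1/2 * L * d) ≤ (1 + η τ) / 2 * D := by
    have h' : B * d * L * (1 - 1/2 * η τ) < D := hcon
    have hp : (0:ℝ) < B * d * L := by positivity
    nlinarith [mul_lt_mul_of_pos_left h' (show (0:ℝ) < 1 + η τ by linarith),
      mul_nonneg (mul_nonneg hη0 (by linarith : (0:ℝ) ≤ 1 - η τ)) hp.le]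
  have hmax1 : max (dist (f s) (f m₁)) (dist (f t) (f m₁)) ≤ (1 + η τ) / 2 * D := by
    rw [dist_comm (f t) (f m₁)]
    apply max_le
    · calc dist (f s) (f m₁) ≤ B * dist s m₁ := hsm1u
        _ = B * (1/2 * L * d) := by rw [h1]
        _ ≤ _ := hkey
    · calc dist (f m₁) (f t) ≤ B * dist m₁ t := hm1tu
        _ = B * (1/2 * L * d) := by rw [h3]
        _ ≤ _ := hkey
  have hmax2 : max (dist (f s) (f m₂)) (dist (f t) (f m₂)) ≤ (1 + η τ) / 2 * D := by
    rw [dist_comm (f t) (f m₂)]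
    apply max_le
    · calc dist (f s) (f m₂) ≤ B * dist s m₂ := hsm2u
        _ = B * (1/2 * L * d) := by rw [h2]
        _ ≤ _ := hkey
    · calc dist (f m₂) (f t) ≤ B * dist m₂ t := hm2tu
        _ = B * (1/2 * L * d) := by rw [h4]
        _ ≤ _ := hkey
  have hlt := hη τ hτpos (f s) (f t) (f m₁) (f m₂) hne hmax1 hmax2
  -- lower bound on dist (f m₁) (f m₂)
  have hlow : (1/A) * (ε * d) ≤ dist (f m₁) (f m₂) := by
    have := hmml
    rwa [h5] at this
  -- upper bound: τ * D ≤ τ * (B * d) = ε * d / (2 * A)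
  have hτD : τ * D ≤ ε * d / (2 * A) := by
    have hDle : D ≤ B * d := hstu
    have : τ * D ≤ τ * (B * d) := by
      apply mul_le_mul_of_nonneg_left hDle hτpos.le
    calc τ * D ≤ τ * (B * d) := this
      _ = ε * d / (2 * A) := by rw [hτdef]; field_simp
  have : (1/A) * (ε * d) ≤ ε * d / (2 * A) := le_of_lt (lt_of_le_of_lt hlow (lt_of_lt_of_le hlt hτD))
  have hεd : 0 < ε * d := mul_pos hε hst
  have h2' := mul_le_mul_of_nonneg_left this (by positivity : (0:ℝ) ≤ 2 * A)
  have e1 : 2 * A * (1/A * (ε * d)) = 2 * (ε * d) := by field_simp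
  have e2 : 2 * A * (ε * d / (2 * A)) = ε * d := by field_simp
  linarith
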